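/- Let 𝔞 be a real vector space of finite dimension r equipped with a nonzero translation-invariant (Lebesgue) Borel measure da. Let χ_1, …, χ_n be linear forms on 𝔞 that span the dual space 𝔞* and satisfy χ_1 + ⋯ + χ_n = 0. Let Σ⁺ be a finite set of linear forms on 𝔞, 𝔞⁺ = {a ∈ 𝔞 : α(a) ≥ 0 for all α ∈ Σ⁺}, and Δ = {a ∈ 𝔞⁺ : χ_i(a) ≤ 1 for i = 1, …, n}, a compact set of finite Lebesgue measure 𝓛(Δ). Let γ be a linear form on 𝔞 and u = sup_{a ∈ Δ} γ(a). Then for every R > 0, every bounded measurable function f : ℝⁿ → ℂ vanishing outside {x : max_i |x_i| ≤ R}, and every T > 0 with TR ≥ 1, one has |∫_{𝔞⁺} f(e^{χ_1(a)}/T, …, e^{χ_n(a)}/T) e^{γ(a)} da| ≤ 𝓛(Δ) · (sup |f|) · (RT)^u · (ln(RT))^r. -/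

import Mathlib

open MeasureTheory Pointwise

/-- **Lemma 2.6.** Upper bound for a Laplace-type integral over the positive Weyl chamber:
`|∫_{𝔞⁺} f(e^{χ₁(a)}/T, …, e^{χₙ(a)}/T) e^{γ(a)} da| ≤ 𝓛(Δ)·sup|f|·(RT)^u·(ln RT)^r`. -/
theorem laplace_integral_upper_bound
    {𝔞 : Type*} [NormedAddCommGroup 𝔞] [NormedSpace ℝ 𝔞] [FiniteDimensional ℝ 𝔞]
    [MeasurableSpace 𝔞] [BorelSpace 𝔞]
    (r : ℕ) (hr : Module.finrank ℝ 𝔞 = r)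
    (da : Measure 𝔞) [da.IsAddHaarMeasure]
    {n : ℕ} (χ : Fin n → (𝔞 →ₗ[ℝ] ℝ))
    (hspan : Submodule.span ℝ (Set.range χ) = ⊤)
    (hsum : ∑ i, χ i = 0)
    (Sigpos : Finset (𝔞 →ₗ[ℝ] ℝ))
    (𝔞pos : Set 𝔞) (h𝔞pos : 𝔞pos = {a : 𝔞 | ∀ α ∈ Sigpos, 0 ≤ α a})
    (Δ : Set 𝔞) (hΔ : Δ = {a ∈ 𝔞pos | ∀ i, χ i a ≤ 1}) (hΔc : IsCompact Δ)
    (γ : 𝔞 →ₗ[ℝ] ℝ) (u : ℝ) (hu : IsLUB ((fun a => γ a) '' Δ) u) :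
    ∀ R > (0 : ℝ), ∀ f : (Fin n → ℝ) → ℂ, Measurable f → (∃ M, ∀ x, ‖f x‖ ≤ M) →
      (∀ x : Fin n → ℝ, (∃ i, R < |x i|) → f x = 0) →
      ∀ T > (0 : ℝ), 1 ≤ T * R →
      ‖∫ a in 𝔞pos, Real.exp (γ a) • f (fun i => Real.exp (χ i a) / T) ∂da‖
        ≤ (da Δ).toReal * (⨆ x, ‖f x‖) * (R * T) ^ u * Real.log (R * T) ^ r := by
  intro R hR f hfm hfb hf0 T hT hTR
  obtain ⟨M, hM⟩ := hfb
  have hRT1 : (1 : ℝ) ≤ R * T := by rwa [mul_comm] at hTR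
  have hRTpos : (0 : ℝ) < R * T := lt_of_lt_of_le one_pos hRT1
  set L : ℝ := Real.log (R * T) with hLdef
  have hL0 : 0 ≤ L := Real.log_nonneg hRT1
  -- the support set
  set E : Set 𝔞 := {a | (∀ α ∈ Sigpos, 0 ≤ α a) ∧ ∀ i, χ i a ≤ L} with hEdef
  -- continuity/measurability of linear forms
  have hmφ : ∀ φ : 𝔞 →ₗ[ℝ] ℝ, Measurable φ := fun φ =>
    φ.continuous_of_finiteDimensional.measurable
  have hEmeas : MeasurableSet E := by
    have : E = (⋂ α ∈ Sigpos, {a : 𝔞 | 0 ≤ α a}) ∩ ⋂ i, {a : 𝔞 | χ i a ≤ L} := by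
      ext a; simp [hEdef]
    rw [this]
    exact MeasurableSet.inter
      (MeasurableSet.biInter Sigpos.countable_toSet fun α _ =>
        measurableSet_le measurable_const (hmφ α))
      (MeasurableSet.iInter fun i => measurableSet_le (hmφ (χ i)) measurable_const)
  have h𝔞posmeas : MeasurableSet 𝔞pos := by
    rw [h𝔞pos]
    have : {a : 𝔞 | ∀ α ∈ Sigpos, 0 ≤ α a} = ⋂ α ∈ Sigpos, {a : 𝔞 | 0 ≤ α a} := by
      ext a; simp
    rw [this]
    exact MeasurableSet.biInter Sigpos.countable_toSet fun α _ =>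
      measurableSet_le measurable_const (hmφ α)
  -- if L = 0, elements of E are 0
  have hEzero : L = 0 → ∀ a ∈ E, a = 0 := by
    intro hL a ha
    have hle : ∀ i ∈ Finset.univ, χ i a ≤ 0 := fun i _ => by
      simpa [hL] using ha.2 i
    have hsuma : ∑ i, χ i a = 0 := by
      have := congrArg (fun φ : 𝔞 →ₗ[ℝ] ℝ => φ a) hsum
      simpa using this
    have hall : ∀ i, χ i a = 0 := by
      have := (Finset.sum_eq_zero_iff_of_nonpos hle).1 hsuma
      intro i; exact this i (Finset.mem_univ i)
    have hdual : ∀ φ : Module.Dual ℝ 𝔞, φ a = 0 := by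
      intro φ
      have hφmem : φ ∈ Submodule.span ℝ (Set.range χ) := by rw [hspan]; trivial
      refine Submodule.span_induction ?_ ?_ ?_ ?_ hφmem
      · rintro ψ ⟨i, rfl⟩; exact hall i
      · simp
      · intro ψ₁ ψ₂ _ _ h1 h2; simp [h1, h2]
      · intro c ψ _ h; simp [h]
    exact (Module.forall_dual_apply_eq_zero_iff ℝ a).1 hdual
  -- key pointwise bound on γ on E
  have hγE : ∀ a ∈ E, γ a ≤ u * L := by
    intro a ha
    rcases eq_or_lt_of_le hL0 with hL | hL
    · rw [hEzero hL.symm a ha]; simp [← hL]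
    · set d : 𝔞 := L⁻¹ • a with hd
      have hdΔ : d ∈ Δ := by
        rw [hΔ, h𝔞pos]
        constructor
        · intro α hα
          have := ha.1 α hα
          rw [hd, LinearMap.map_smul, smul_eq_mul]
          positivity
        · intro i
          rw [hd, LinearMap.map_smul, smul_eq_mul]
          calc L⁻¹ * χ i a ≤ L⁻¹ * L :=
                mul_le_mul_of_nonneg_left (ha.2 i) (inv_nonneg.2 hL0)
            _ = 1 := inv_mul_cancel₀ hL.ne'
      have hγd : γ d ≤ u := hu.1 ⟨d, hdΔ, rfl⟩
      have : γ a = L * γ d := by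
        rw [hd, LinearMap.map_smul, smul_eq_mul, ← mul_assoc, mul_inv_cancel₀ hL.ne', one_mul]
      rw [this, mul_comm u L]
      exact mul_le_mul_of_nonneg_left hγd hL.le
  -- measure bound
  have hEmeasbd : da E ≤ ENNReal.ofReal (L ^ r) * da Δ := by
    rcases eq_or_lt_of_le hL0 with hL | hL
    · -- L = 0
      rcases Nat.eq_zero_or_pos r with hr0 | hrpos
      · -- trivial space
        subst hr0
        have : Subsingleton 𝔞 := Module.finrank_zero_iff.1 hr
        have hEΔ : E ⊆ Δ := by
          intro a _
          rw [hΔ, h𝔞pos]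
          have ha0 : a = 0 := Subsingleton.elim a 0
          subst ha0
          simp
        calc da E ≤ da Δ := measure_mono hEΔ
          _ = ENNReal.ofReal (L ^ 0) * da Δ := by simp
      · have hE0 : E ⊆ {0} := by
          intro a ha; exact hEzero hL.symm a ha
        have hnt : Nontrivial 𝔞 := by
          have : 0 < Module.finrank ℝ 𝔞 := hr ▸ hrpos
          exact Module.nontrivial_of_finrank_pos this
        calc da E ≤ da {0} := measure_mono hE0
          _ = 0 := measure_singleton 0
          _ ≤ ENNReal.ofReal (L ^ r) * da Δ := zero_le
    · -- L > 0 : E = L • Δ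
      have hEeq : E = L • Δ := by
        ext a
        constructor
        · intro ha
          refine ⟨L⁻¹ • a, ?_, smul_inv_smul₀ hL.ne' a⟩
          rw [hΔ, h𝔞pos]
          constructor
          · intro α hα
            have := ha.1 α hα
            rw [LinearMap.map_smul, smul_eq_mul]
            positivity
          · intro i
            rw [LinearMap.map_smul, smul_eq_mul]
            calc L⁻¹ * χ i a ≤ L⁻¹ * L :=
                  mul_le_mul_of_nonneg_left (ha.2 i) (inv_nonneg.2 hL0)
              _ = 1 := inv_mul_cancel₀ hL.ne'
        · rintro ⟨d, hd, rfl⟩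
          rw [hΔ, h𝔞pos] at hd
          constructor
          · intro α hα
            have := hd.1 α hα
            rw [LinearMap.map_smul, smul_eq_mul]
            positivity
          · intro i
            rw [LinearMap.map_smul, smul_eq_mul]
            calc L * χ i d ≤ L * 1 := mul_le_mul_of_nonneg_left (hd.2 i) hL.le
              _ = L := mul_one L
      rw [hEeq, Measure.addHaar_smul, hr, abs_of_nonneg (pow_nonneg hL0 r)]
  have hΔfin : da Δ ≠ ⊤ := hΔc.measure_lt_top.ne
  have hEfin : da E ≠ ⊤ := by
    refine ne_top_of_le_ne_top ?_ hEmeasbd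
    exact ENNReal.mul_ne_top ENNReal.ofReal_ne_top hΔfin
  -- sup of f
  set M' : ℝ := ⨆ x, ‖f x‖ with hM'def
  have hbdd : BddAbove (Set.range fun x => ‖f x‖) := ⟨M, by rintro _ ⟨x, rfl⟩; exact hM x⟩
  have hM' : ∀ x, ‖f x‖ ≤ M' := fun x => le_ciSup hbdd x
  have hM'0 : 0 ≤ M' := le_trans (norm_nonneg _) (hM' (fun _ => 0))
  set C : ℝ := (R * T) ^ u * M' with hCdef
  have hC0 : 0 ≤ C := mul_nonneg (Real.rpow_nonneg hRTpos.le u) hM'0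
  -- the integrand
  set g : 𝔞 → ℂ := fun a => Real.exp (γ a) • f (fun i => Real.exp (χ i a) / T) with hgdef
  -- pointwise bound
  have hbound : ∀ a ∈ 𝔞pos, ‖g a‖ ≤ E.indicator (fun _ => C) a := by
    intro a ha
    by_cases haE : a ∈ E
    · rw [Set.indicator_of_mem haE]
      have h1 : ‖g a‖ = Real.exp (γ a) * ‖f (fun i => Real.exp (χ i a) / T)‖ := by
        rw [hgdef]; simp [norm_smul, Real.norm_eq_abs, abs_of_pos (Real.exp_pos _)]
      rw [h1, hCdef]
      have h2 : Real.exp (γ a) ≤ (R * T) ^ u := by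
        rw [Real.rpow_def_of_pos hRTpos]
        refine Real.exp_le_exp.2 ?_
        rw [mul_comm]
        exact hγE a haE
      exact mul_le_mul h2 (hM' _) (norm_nonneg _) (Real.rpow_nonneg hRTpos.le u)
    · have hf0' : f (fun i => Real.exp (χ i a) / T) = 0 := by
        apply hf0
        have h1 : ∀ α ∈ Sigpos, 0 ≤ α a := by rw [h𝔞pos] at ha; exact ha
        have h2 : ¬ ∀ i, χ i a ≤ L := fun h => haE ⟨h1, h⟩
        push_neg at h2
        obtain ⟨i, hi⟩ := h2
        refine ⟨i, ?_⟩
        have h3 : R * T < Real.exp (χ i a) := by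
          calc R * T = Real.exp L := (Real.exp_log hRTpos).symm
            _ < Real.exp (χ i a) := Real.exp_lt_exp.2 hi
        have h4 : R < Real.exp (χ i a) / T := by
          rw [lt_div_iff₀ hT]; exact (by rw [mul_comm] at h3 ⊢; exact h3 : R * T < Real.exp (χ i a))
        rwa [abs_of_pos (div_pos (Real.exp_pos _) hT)]
      rw [hgdef]
      simp only [hf0', smul_zero, norm_zero]
      exact Set.indicator_nonneg (fun _ _ => hC0) a
  -- integrability of the dominating function
  have hind_int : Integrable (E.indicator fun _ => C) da := by
    rw [integrable_indicator_iff hEmeas]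
    exact integrableOn_const hEfin enorm_ne_top
  -- measurability of g
  have hgmeas : Measurable g := by
    refine Measurable.smul (f := fun a => Real.exp (γ a))
      (g := fun a => f (fun i => Real.exp (χ i a) / T)) ?_ ?_
    · exact ((hmφ γ).exp).comp measurable_id
    · exact hfm.comp (measurable_pi_lambda _ fun i => ((hmφ (χ i)).exp).div_const T)
  have hg_int : IntegrableOn g 𝔞pos da := by
    refine Integrable.mono' hind_int.integrableOn hgmeas.aestronglyMeasurable ?_
    exact ae_restrict_of_forall_mem h𝔞posmeas hbound
  -- main estimate
  have key : ‖∫ a in 𝔞pos, g a ∂da‖ ≤ C * (da E).toReal := by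
    calc ‖∫ a in 𝔞pos, g a ∂da‖ ≤ ∫ a in 𝔞pos, ‖g a‖ ∂da :=
          norm_integral_le_integral_norm _
      _ ≤ ∫ a in 𝔞pos, E.indicator (fun _ => C) a ∂da := by
          refine setIntegral_mono_on hg_int.norm hind_int.integrableOn h𝔞posmeas hbound
      _ ≤ ∫ a, E.indicator (fun _ => C) a ∂da :=
          setIntegral_le_integral hind_int
            (Filter.Eventually.of_forall (Set.indicator_nonneg (fun _ _ => hC0)))
      _ = C * (da E).toReal := by
          rw [integral_indicator hEmeas, setIntegral_const, smul_eq_mul, mul_comm]; rfl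
  have hEtoReal : (da E).toReal ≤ L ^ r * (da Δ).toReal := by
    have h1 := ENNReal.toReal_mono (ENNReal.mul_ne_top ENNReal.ofReal_ne_top hΔfin) hEmeasbd
    rwa [ENNReal.toReal_mul, ENNReal.toReal_ofReal (pow_nonneg hL0 r)] at h1
  calc ‖∫ a in 𝔞pos, g a ∂da‖ ≤ C * (da E).toReal := key
    _ ≤ C * (L ^ r * (da Δ).toReal) := mul_le_mul_of_nonneg_left hEtoReal hC0
    _ = (da Δ).toReal * M' * (R * T) ^ u * L ^ r := by rw [hCdef]; ring
    _ = (da Δ).toReal * (⨆ x, ‖f x‖) * (R * T) ^ u * Real.log (R * T) ^ r := by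
        rw [hM'def, hLdef]
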